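/- Let (X, 𝒰) be a uniform space and f : X → X continuous. If the induced map f̄ : (𝒦(X), 𝒦(𝒰)) → (𝒦(X), 𝒦(𝒰)) is topologically transitive, then the Zadeh extension f̂ : (ℱ(X), 𝒰_∞) → (ℱ(X), 𝒰_∞) is topologically transitive. -/

import Mathlib

open Set Filter Topology
open scoped Uniformity

/-- The α-cut of a fuzzy set: `{x | α ≤ u x}` for `α ≠ 0`, and the support
(closure of `{x | 0 < u x}`) for `α = 0`. -/
noncomputable def fuzzyCut {X : Type*} [TopologicalSpace X] (u : X → ℝ) (α : ℝ) : Set X :=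
  if α = 0 then closure {x | 0 < u x} else {x | α ≤ u x}

/-- `u` belongs to `ℱ(X)`: a normal upper semicontinuous `[0,1]`-valued fuzzy set
with compact support. -/
structure IsFuzzySet {X : Type*} [TopologicalSpace X] (u : X → ℝ) : Prop where
  mem_Icc : ∀ x, u x ∈ Set.Icc (0:ℝ) 1
  usc : UpperSemicontinuous u
  normal : ∃ x, u x = 1
  compact_supp : IsCompact (closure {x | 0 < u x})

/-- The Zadeh extension of `f`: `x ↦ sup {u z : f z = x}` (and `0` when the
preimage is empty, since `sSup ∅ = 0` in `ℝ`). -/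
noncomputable def zadeh {X : Type*} (f : X → X) (u : X → ℝ) : X → ℝ :=
  fun x => sSup (u '' (f ⁻¹' {x}))

/-- `W(A) = ⋃ a ∈ A, W(a)` where `W(a) = {y | (a, y) ∈ W}`. -/
def ballImage {Y : Type*} (W : Set (Y × Y)) (A : Set Y) : Set Y :=
  {y | ∃ a ∈ A, (a, y) ∈ W}

/-- The Hausdorff entourage relation `𝒦[W]`: `(A,B) ∈ 𝒦[W]` iff `A ⊆ W(B)` and `B ⊆ W(A)`. -/
def KRel {Y : Type*} (W : Set (Y × Y)) (A B : Set Y) : Prop :=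
  A ⊆ ballImage W B ∧ B ⊆ ballImage W A

/-- The level-wise entourage relation `ℱ[W]`: `(u_α, v_α) ∈ 𝒦[W]` for all `α ∈ [0,1]`. -/
def FRel {X : Type*} [TopologicalSpace X] (W : Set (X × X)) (u v : X → ℝ) : Prop :=
  ∀ α ∈ Set.Icc (0:ℝ) 1, KRel W (fuzzyCut u α) (fuzzyCut v α)

/-- The Skorokhod entourage relation `G[W, ε]`: there is an increasing homeomorphism `t`
of `[0,1]` with `‖t‖ < ε` and `(u_α, v_{t α}) ∈ 𝒦[W]` for all `α ∈ [0,1]`. -/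
def SkoRel {X : Type*} [TopologicalSpace X] (W : Set (X × X)) (ε : ℝ) (u v : X → ℝ) : Prop :=
  ∃ t : ℝ → ℝ, StrictMonoOn t (Set.Icc 0 1) ∧ t 0 = 0 ∧ t 1 = 1 ∧
    Set.MapsTo t (Set.Icc 0 1) (Set.Icc 0 1) ∧ Set.SurjOn t (Set.Icc 0 1) (Set.Icc 0 1) ∧
    (∀ α ∈ Set.Icc (0:ℝ) 1, |t α - α| < ε) ∧
    (∀ α ∈ Set.Icc (0:ℝ) 1, KRel W (fuzzyCut u α) (fuzzyCut v (t α)))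

/-- The sendograph of `u`: `end(u) ∩ (u₀ × [0,1])`. -/
noncomputable def send {X : Type*} [TopologicalSpace X] (u : X → ℝ) : Set (X × ℝ) :=
  {p | p.1 ∈ fuzzyCut u 0 ∧ p.2 ∈ Set.Icc (0:ℝ) 1 ∧ p.2 ≤ u p.1}

/-- The product entourage `U × V_ε` on `X × [0,1]`. -/
def prodEnt {X : Type*} (U : Set (X × X)) (ε : ℝ) : Set ((X × ℝ) × (X × ℝ)) :=
  {p | (p.1.1, p.2.1) ∈ U ∧ |p.1.2 - p.2.2| < ε}

/-- The sendograph entourage relation `S[U, ε]`. -/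
noncomputable def SendRel {X : Type*} [TopologicalSpace X] (U : Set (X × X)) (ε : ℝ)
    (u v : X → ℝ) : Prop :=
  KRel (prodEnt U ε) (send u) (send v)

/-- `u_{α⁺} = closure (⋃ β ∈ (α, 1], u_β)`, the right limit of the level map. -/
noncomputable def cutPlus {X : Type*} [TopologicalSpace X] (u : X → ℝ) (α : ℝ) : Set X :=
  closure (⋃ β ∈ Set.Ioc α 1, fuzzyCut u β)

/-- `B` belongs to the Vietoris basic open set `⟨V 0, …, V (k-1)⟩`. -/
def inVietoris {Y : Type*} (B : Set Y) (k : ℕ) (V : Fin k → Set Y) : Prop :=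
  B ⊆ (⋃ i, V i) ∧ ∀ i, (B ∩ V i).Nonempty

section Aux
set_option linter.unusedSectionVars false
set_option linter.unusedVariables false
set_option maxHeartbeats 1000000

variable {X : Type*} [UniformSpace X]

namespace ZTrans

lemma mem_ballImage {W : Set (X × X)} {S : Set X} {y : X} :
    y ∈ ballImage W S ↔ ∃ a ∈ S, (a, y) ∈ W := Iff.rfl

lemma ballImage_mono_set {W : Set (X × X)} {S T : Set X} (h : S ⊆ T) :
    ballImage W S ⊆ ballImage W T := fun y ⟨a, ha, haw⟩ => ⟨a, h ha, haw⟩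

lemma ballImage_mono_ent {W W' : Set (X × X)} {S : Set X} (h : W ⊆ W') :
    ballImage W S ⊆ ballImage W' S := fun y ⟨a, ha, haw⟩ => ⟨a, ha, h haw⟩

lemma subset_ballImage {W : Set (X × X)} (hW : W ∈ 𝓤 X) (S : Set X) :
    S ⊆ ballImage W S := fun y hy => ⟨y, hy, refl_mem_uniformity hW⟩

lemma isOpen_ballImage {W : Set (X × X)} (hW : IsOpen W) (S : Set X) :
    IsOpen (ballImage W S) := by
  have : ballImage W S = ⋃ a ∈ S, UniformSpace.ball a W := by
    ext y
    simp only [mem_ballImage, Set.mem_iUnion, UniformSpace.ball, Set.mem_preimage, exists_prop]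
  rw [this]
  exact isOpen_biUnion fun a _ => UniformSpace.isOpen_ball a hW

lemma closure_subset_ballImage {W : Set (X × X)} (hW : W ∈ 𝓤 X) (hsymm : SetRel.IsSymm W)
    (S : Set X) : closure S ⊆ ballImage W S := by
  intro x hx
  rcases mem_closure_iff_nhds.1 hx _ (UniformSpace.ball_mem_nhds x hW) with ⟨z, hz, hzS⟩
  exact ⟨z, hzS, hsymm.symm _ _ hz⟩

section Cut

variable {u : X → ℝ}

lemma cut_of_ne {α : ℝ} (hα : α ≠ 0) : fuzzyCut u α = {x | α ≤ u x} := if_neg hα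

lemma cut_zero : fuzzyCut u 0 = closure {x | 0 < u x} := if_pos rfl

lemma cut_subset_supp {α : ℝ} (hα : 0 < α) : fuzzyCut u α ⊆ fuzzyCut u 0 := by
  rw [cut_of_ne hα.ne', cut_zero]
  exact fun x hx => subset_closure (lt_of_lt_of_le hα hx)

lemma cut_mono {α β : ℝ} (h0 : 0 < α) (h : α ≤ β) : fuzzyCut u β ⊆ fuzzyCut u α := by
  rw [cut_of_ne h0.ne', cut_of_ne (h0.trans_le h).ne']
  exact fun x hx => le_trans h hx

lemma cut_closed (hu : IsFuzzySet u) {α : ℝ} (hα : 0 < α) : IsClosed (fuzzyCut u α) := by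
  rw [cut_of_ne hα.ne']
  have : {x | α ≤ u x} = (u ⁻¹' Set.Iio α)ᶜ := by
    ext x; simp [not_lt]
  rw [this]
  exact (hu.usc.isOpen_preimage α).isClosed_compl

lemma cut_compact (hu : IsFuzzySet u) (α : ℝ) (hα : 0 ≤ α) : IsCompact (fuzzyCut u α) := by
  rcases eq_or_lt_of_le hα with h | h
  · rw [← h, cut_zero]; exact hu.compact_supp
  · exact IsCompact.of_isClosed_subset hu.compact_supp (cut_closed hu h)
      ((cut_subset_supp h).trans (by rw [cut_zero]))

lemma cut_nonempty (hu : IsFuzzySet u) {α : ℝ} (hα : α ≤ 1) : (fuzzyCut u α).Nonempty := by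
  obtain ⟨x, hx⟩ := hu.normal
  rcases eq_or_ne α 0 with rfl | h
  · rw [cut_zero]; exact ⟨x, subset_closure (by simp [hx])⟩
  · rw [cut_of_ne h]; exact ⟨x, by simp [hx, hα]⟩

lemma exists_net {S : Set X} (hS : IsCompact S) {W : Set (X × X)} (hW : W ∈ 𝓤 X) :
    ∃ t : Finset X, ↑t ⊆ S ∧ S ⊆ ballImage W ↑t := by
  obtain ⟨t, hts, hcov⟩ := hS.elim_nhds_subcover (fun x => UniformSpace.ball x W)
    (fun x _ => UniformSpace.ball_mem_nhds x hW)
  refine ⟨t, hts, fun y hy => ?_⟩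
  rcases Set.mem_iUnion₂.1 (hcov hy) with ⟨a, hat, hya⟩
  exact ⟨a, hat, hya⟩

end Cut

/-- Hyperspace transitivity hypothesis. -/
def HTrans (f : X → X) : Prop :=
  ∀ K L : Set X, IsCompact K → K.Nonempty → IsCompact L → L.Nonempty →
      ∀ U ∈ 𝓤 X, ∀ V ∈ 𝓤 X, ∃ n : ℕ, 0 < n ∧ ∃ A : Set X, IsCompact A ∧ A.Nonempty ∧
        KRel U K A ∧ KRel V L (f^[n] '' A)

section WM

variable {f : X → X}

/-- One open source, finitely many open targets, hit simultaneously. -/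
lemma multi_target (htr : HTrans f) {S : Set X} (hSo : IsOpen S) (hSne : S.Nonempty)
    {k : ℕ} (T : Fin k → Set X) (hTo : ∀ i, IsOpen (T i)) (hTne : ∀ i, (T i).Nonempty) :
    ∃ n : ℕ, 0 < n ∧ ∀ i, ∃ a ∈ S, f^[n] a ∈ T i := by
  obtain ⟨x₀, hx₀⟩ := hSne
  obtain ⟨U₀, hU₀u, hU₀⟩ := UniformSpace.mem_nhds_iff.1 (hSo.mem_nhds hx₀)
  rcases Nat.eq_zero_or_pos k with rfl | hk
  · obtain ⟨n, hn, -⟩ := htr {x₀} {x₀} isCompact_singleton ⟨x₀, rfl⟩ isCompact_singleton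
      ⟨x₀, rfl⟩ U₀ hU₀u U₀ hU₀u
    exact ⟨n, hn, fun i => i.elim0⟩
  haveI : Nonempty (Fin k) := ⟨⟨0, hk⟩⟩
  choose q hq using fun i => hTne i
  choose Vi hViu hVi using fun i => UniformSpace.mem_nhds_iff.1 ((hTo i).mem_nhds (hq i))
  set V₀ : Set (X × X) := ⋂ i, Vi i with hV₀
  have hV₀u : V₀ ∈ 𝓤 X := Filter.iInter_mem.2 hViu
  set V' := SetRel.symmetrize V₀ with hV'
  have hV'u : V' ∈ 𝓤 X := symmetrize_mem_uniformity hV₀u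
  have hV'symm : SetRel.IsSymm V' := SetRel.isSymm_symmetrize (R := V₀)
  obtain ⟨n, hn, A, -, -, hKA, hKL⟩ := htr {x₀} (Set.range q) isCompact_singleton ⟨x₀, rfl⟩
    ((Set.finite_range q).isCompact) (Set.range_nonempty q) U₀ hU₀u V' hV'u
  refine ⟨n, hn, fun i => ?_⟩
  obtain ⟨y, hyA, hyq⟩ := hKL.1 ⟨i, rfl⟩
  obtain ⟨a, haA, hay⟩ := hyA
  have haS : a ∈ S := by
    obtain ⟨p, hp, hpa⟩ := hKA.2 haA
    rcases hp with rfl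
    exact hU₀ hpa
  refine ⟨a, haS, ?_⟩
  rw [← hay] at hyq
  have : (q i, f^[n] a) ∈ V' := hV'symm.symm _ _ hyq
  exact hVi i (((SetRel.symmetrize_subset_self (R := V₀)).trans (Set.iInter_subset _ i)) this)

lemma chain (htr : HTrans f) (hf : Continuous f) (x₀ : X) :
    ∀ (k : ℕ) (P Q : Fin k → Set X), (∀ i, IsOpen (P i)) → (∀ i, (P i).Nonempty) →
    (∀ i, IsOpen (Q i)) → (∀ i, (Q i).Nonempty) →
    ∃ (W : Set X) (t : Fin k → ℕ), IsOpen W ∧ W.Nonempty ∧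
      (∀ i, W ⊆ f^[t i] ⁻¹' (P i)) ∧ (∀ i, (f^[t i] ⁻¹' (Q i)).Nonempty) := by
  intro k
  induction k with
  | zero =>
    intro P Q _ _ _ _
    exact ⟨Set.univ, fun i => i.elim0, isOpen_univ, ⟨x₀, trivial⟩,
      fun i => i.elim0, fun i => i.elim0⟩
  | succ k ih =>
    intro P Q hPo hPne hQo hQne
    obtain ⟨W, t, hWo, hWne, hWP, hQpre⟩ := ih (fun i => P i.castSucc) (fun i => Q i.castSucc)
      (fun i => hPo _) (fun i => hPne _) (fun i => hQo _) (fun i => hQne _)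
    obtain ⟨s, hs, hhit⟩ := multi_target htr hWo hWne
      (fun j : Fin 2 => if j = 0 then P (Fin.last k) else Q (Fin.last k))
      (by intro j; split <;> [exact hPo _; exact hQo _])
      (by intro j; split <;> [exact hPne _; exact hQne _])
    obtain ⟨a, haW, haP⟩ := hhit 0
    obtain ⟨b, hbW, hbQ⟩ := hhit 1
    simp only [if_pos rfl] at haP
    norm_num at hbQ
    refine ⟨W ∩ f^[s] ⁻¹' (P (Fin.last k)),
      fun i => if h : (i : ℕ) < k then t ⟨i, h⟩ else s,
      hWo.inter ((hPo _).preimage (hf.iterate s)), ⟨a, haW, haP⟩, fun i => ?_, fun i => ?_⟩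
    · by_cases h : (i : ℕ) < k
      · simp only [dif_pos h]
        intro y hy
        have := hWP ⟨i, h⟩ hy.1
        have hcast : (⟨i, h⟩ : Fin k).castSucc = i := by
          ext; rfl
        rwa [hcast] at this
      · simp only [dif_neg h]
        have : i = Fin.last k := by
          ext
          exact Nat.le_antisymm (Nat.lt_succ_iff.1 i.isLt) (Nat.le_of_not_lt h)
        rw [this]
        exact fun y hy => hy.2
    · by_cases h : (i : ℕ) < k
      · simp only [dif_pos h]
        have := hQpre ⟨i, h⟩
        have hcast : (⟨i, h⟩ : Fin k).castSucc = i := by ext; rfl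
        rwa [hcast] at this
      · simp only [dif_neg h]
        have : i = Fin.last k := by
          ext
          exact Nat.le_antisymm (Nat.lt_succ_iff.1 i.isLt) (Nat.le_of_not_lt h)
        rw [this]
        exact ⟨b, hbQ⟩

/-- Weak mixing of all orders, `Fin k` version. -/
lemma wm_fin (htr : HTrans f) (hf : Continuous f) (x₀ : X)
    (k : ℕ) (P Q : Fin k → Set X) (hPo : ∀ i, IsOpen (P i)) (hPne : ∀ i, (P i).Nonempty)
    (hQo : ∀ i, IsOpen (Q i)) (hQne : ∀ i, (Q i).Nonempty) :
    ∃ n : ℕ, 0 < n ∧ ∀ i, ∃ p ∈ P i, f^[n] p ∈ Q i := by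
  obtain ⟨W, t, hWo, hWne, hWP, hQpre⟩ := chain htr hf x₀ k P Q hPo hPne hQo hQne
  obtain ⟨n, hn, hhit⟩ := multi_target htr hWo hWne (fun i => f^[t i] ⁻¹' (Q i))
    (fun i => (hQo _).preimage (hf.iterate _)) hQpre
  refine ⟨n, hn, fun i => ?_⟩
  obtain ⟨y, hyW, hyQ⟩ := hhit i
  refine ⟨f^[t i] y, hWP i hyW, ?_⟩
  rw [← Function.iterate_add_apply, Nat.add_comm, Function.iterate_add_apply]
  exact hyQ

/-- Weak mixing of all orders, finite index version. -/
lemma wm_finite (htr : HTrans f) (hf : Continuous f) (x₀ : X)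
    {ι : Type*} [Fintype ι] (P Q : ι → Set X) (hPo : ∀ i, IsOpen (P i))
    (hPne : ∀ i, (P i).Nonempty) (hQo : ∀ i, IsOpen (Q i)) (hQne : ∀ i, (Q i).Nonempty) :
    ∃ n : ℕ, 0 < n ∧ ∀ i, ∃ p ∈ P i, f^[n] p ∈ Q i := by
  let e := Fintype.equivFin ι
  obtain ⟨n, hn, hhit⟩ := wm_fin htr hf x₀ (Fintype.card ι) (fun j => P (e.symm j))
    (fun j => Q (e.symm j)) (fun j => hPo _) (fun j => hPne _) (fun j => hQo _) (fun j => hQne _)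
  refine ⟨n, hn, fun i => ?_⟩
  have := hhit (e i)
  simpa using this

end WM

section Ladder

variable {u v : X → ℝ}

lemma left_good (hu : IsFuzzySet u) {W : Set (X × X)} (hW : W ∈ 𝓤 X) (hWo : IsOpen W)
    {α : ℝ} (hα0 : 0 < α) :
    ∃ δ, 0 < δ ∧ δ < α ∧ ∀ γ, δ < γ → γ ≤ α → fuzzyCut u γ ⊆ ballImage W (fuzzyCut u α) := by
  have hOopen : IsOpen (ballImage W (fuzzyCut u α)) := isOpen_ballImage hWo _
  by_cases hex : ∃ δ, (0 < δ ∧ δ < α) ∧ fuzzyCut u δ ⊆ ballImage W (fuzzyCut u α)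
  · obtain ⟨δ, ⟨hδ0, hδα⟩, hsub⟩ := hex
    exact ⟨δ, hδ0, hδα, fun γ hγ1 hγ2 => (cut_mono hδ0 hγ1.le).trans hsub⟩
  exfalso
  push_neg at hex
  haveI : Nonempty (Set.Ioo (0:ℝ) α) := ⟨⟨α/2, ⟨by linarith, by linarith⟩⟩⟩
  obtain ⟨x, hx⟩ := IsCompact.nonempty_iInter_of_directed_nonempty_isCompact_isClosed
    (fun δ : Set.Ioo (0:ℝ) α => fuzzyCut u ↑δ ∩ (ballImage W (fuzzyCut u α))ᶜ)
    (by
      intro δ₁ δ₂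
      refine ⟨⟨max ↑δ₁ ↑δ₂, lt_max_of_lt_left δ₁.2.1, max_lt δ₁.2.2 δ₂.2.2⟩, ?_, ?_⟩
      · exact Set.inter_subset_inter_left _ (cut_mono δ₁.2.1 (le_max_left _ _))
      · exact Set.inter_subset_inter_left _ (cut_mono δ₂.2.1 (le_max_right _ _)))
    (by
      intro δ
      obtain ⟨x, hx1, hx2⟩ := Set.not_subset.1 (hex ↑δ ⟨δ.2.1, δ.2.2⟩)
      exact ⟨x, hx1, hx2⟩)
    (fun δ => (cut_compact hu _ δ.2.1.le).inter_right hOopen.isClosed_compl)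
    (fun δ => (cut_closed hu δ.2.1).inter hOopen.isClosed_compl)
  simp only [Set.mem_iInter] at hx
  have hux : ∀ δ : ℝ, 0 < δ → δ < α → δ ≤ u x := by
    intro δ h1 h2
    have := (hx ⟨δ, h1, h2⟩).1
    rwa [cut_of_ne h1.ne'] at this
  have hxcut : x ∈ fuzzyCut u α := by
    rw [cut_of_ne hα0.ne']
    show α ≤ u x
    by_contra hlt
    push_neg at hlt
    have hm0 : (0:ℝ) ≤ max (u x) 0 := le_max_right _ _
    have h1 : 0 < (max (u x) 0 + α) / 2 := by linarith
    have h2 : (max (u x) 0 + α) / 2 < α := by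
      have := max_lt hlt hα0
      linarith
    have h3 := hux _ h1 h2
    have h4 : u x ≤ max (u x) 0 := le_max_left _ _
    linarith
  exact (hx ⟨α/2, ⟨by linarith, by linarith⟩⟩).2 (subset_ballImage hW _ hxcut)

lemma right_good (hu : IsFuzzySet u) {W : Set (X × X)} (hW : W ∈ 𝓤 X) (hWo : IsOpen W)
    (hWs : SetRel.IsSymm W) {l : ℝ} (hl0 : 0 ≤ l) (hl1 : l < 1) :
    ∃ e, l < e ∧ e ≤ 1 ∧ (∀ γ, l < γ → γ ≤ e → fuzzyCut u γ ⊆ ballImage W (fuzzyCut u e)) ∧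
      (l = 0 → fuzzyCut u 0 ⊆ ballImage W (fuzzyCut u e)) := by
  classical
  have hsub0 : (⋃ γ ∈ Set.Ioc l 1, {x | γ ≤ u x}) ⊆ {x | 0 < u x} := by
    intro x hx
    obtain ⟨γ, hγ, hxγ⟩ := Set.mem_iUnion₂.1 hx
    exact lt_of_lt_of_le (lt_of_le_of_lt hl0 hγ.1) hxγ
  have hPlco : IsCompact (closure (⋃ γ ∈ Set.Ioc l 1, {x | γ ≤ u x})) :=
    IsCompact.of_isClosed_subset hu.compact_supp isClosed_closure (closure_mono hsub0)
  have key : ∀ x ∈ closure (⋃ γ ∈ Set.Ioc l 1, {x | γ ≤ u x}),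
      ∃ γ : ℝ, (l < γ ∧ γ ≤ 1) ∧ x ∈ ballImage W {y | γ ≤ u y} := by
    intro x hx
    obtain ⟨z, hz1, hz2⟩ := mem_closure_iff_nhds.1 hx _ (UniformSpace.ball_mem_nhds x hW)
    obtain ⟨γ, hγ, hzγ⟩ := Set.mem_iUnion₂.1 hz2
    exact ⟨γ, ⟨hγ.1, hγ.2⟩, ⟨z, hzγ, hWs.symm _ _ hz1⟩⟩
  choose! γfun hγfun hmemfun using key
  obtain ⟨t, hts, hcov⟩ := hPlco.elim_nhds_subcover (fun x => ballImage W {y | γfun x ≤ u y})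
    (fun x hx => (isOpen_ballImage hWo _).mem_nhds (hmemfun x hx))
  have hEne : (insert (1:ℝ) (t.image fun x => γfun ↑x)).Nonempty :=
    ⟨1, Finset.mem_insert_self _ _⟩
  set e := (insert (1:ℝ) (t.image fun x => γfun ↑x)).min' hEne with he
  have he1 : e ≤ 1 := Finset.min'_le _ _ (Finset.mem_insert_self _ _)
  have hel : l < e := by
    have hmem := Finset.min'_mem _ hEne
    rw [← he] at hmem
    rcases Finset.mem_insert.1 hmem with h | h
    · rw [h]; exact hl1
    · obtain ⟨x, hxt, hxe⟩ := Finset.mem_image.1 h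
      rw [← hxe]
      exact (hγfun x (hts x hxt)).1
  have hPlcov : closure (⋃ γ ∈ Set.Ioc l 1, {x | γ ≤ u x}) ⊆ ballImage W {y | e ≤ u y} := by
    intro x hx
    obtain ⟨z, hzt, hxz⟩ := Set.mem_iUnion₂.1 (hcov hx)
    refine ballImage_mono_set ?_ hxz
    intro y hy
    have : e ≤ γfun z := Finset.min'_le _ _ (Finset.mem_insert_of_mem
      (Finset.mem_image_of_mem _ hzt))
    exact le_trans this hy
  have hcute : fuzzyCut u e = {y | e ≤ u y} := cut_of_ne (lt_of_le_of_lt hl0 hel).ne'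
  refine ⟨e, hel, he1, ?_, ?_⟩
  · intro γ hγ1 hγ2
    rw [cut_of_ne (lt_of_le_of_lt hl0 hγ1).ne', hcute]
    intro x hx
    exact hPlcov (subset_closure (Set.mem_iUnion₂.2 ⟨γ, ⟨hγ1, le_trans hγ2 he1⟩, hx⟩))
  · intro hl
    rw [cut_zero, hcute]
    have hset : {x | 0 < u x} = ⋃ γ ∈ Set.Ioc l 1, {x | γ ≤ u x} := by
      apply Set.Subset.antisymm
      · intro x hx
        exact Set.mem_iUnion₂.2 ⟨u x, ⟨by rw [hl]; exact hx, (hu.mem_Icc x).2⟩,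
          Set.mem_setOf_eq ▸ le_refl (u x)⟩
      · exact hsub0
    rw [hset]
    exact hPlcov

lemma ladder (hu : IsFuzzySet u) (hv : IsFuzzySet v) {W : Set (X × X)} (hW : W ∈ 𝓤 X)
    (hWo : IsOpen W) (hWs : SetRel.IsSymm W) :
    ∃ (m : ℕ) (β : ℕ → ℝ), 0 < m ∧ β 0 = 0 ∧ β m = 1 ∧ (∀ i, i < m → β i < β (i+1)) ∧
      (∀ i, i < m → ∀ γ, β i < γ → γ ≤ β (i+1) →
        fuzzyCut u γ ⊆ ballImage W (fuzzyCut u (β (i+1))) ∧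
        fuzzyCut v γ ⊆ ballImage W (fuzzyCut v (β (i+1)))) ∧
      fuzzyCut u 0 ⊆ ballImage W (ballImage W (fuzzyCut u (β 1))) ∧
      fuzzyCut v 0 ⊆ ballImage W (ballImage W (fuzzyCut v (β 1))) := by
  let Good : ℝ → ℝ → Prop := fun a b => ∀ γ, a < γ → γ ≤ b →
    fuzzyCut u γ ⊆ ballImage W (fuzzyCut u b) ∧
    fuzzyCut v γ ⊆ ballImage W (fuzzyCut v b)
  let Lad : ℝ → Prop := fun a => ∃ (m : ℕ) (β : ℕ → ℝ), β 0 = a ∧ β m = 1 ∧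
    (∀ i, i < m → β i < β (i+1)) ∧ (∀ i, i < m → Good (β i) (β (i+1)))
  have prepend : ∀ a b, a < b → Lad b → Good a b → Lad a := by
    rintro a b hab ⟨m, β, h0, h1, hinc, hgood⟩ hG
    refine ⟨m + 1, fun k => Nat.casesOn k a β, rfl, h1, ?_, ?_⟩
    · rintro (_ | i) hi
      · simpa [h0] using hab
      · exact hinc i (Nat.lt_of_succ_lt_succ hi)
    · rintro (_ | i) hi
      · simpa [h0] using hG
      · exact hgood i (Nat.lt_of_succ_lt_succ hi)
  have lad1 : Lad 1 := ⟨0, fun _ => 1, rfl, rfl,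
    fun i hi => absurd hi (Nat.not_lt_zero i), fun i hi => absurd hi (Nat.not_lt_zero i)⟩
  have pairLeft : ∀ α : ℝ, 0 < α → ∃ δ, 0 < δ ∧ δ < α ∧ Good δ α := by
    intro α hα
    obtain ⟨δu, hδu0, hδuα, hδu⟩ := left_good hu hW hWo hα
    obtain ⟨δv, hδv0, hδvα, hδv⟩ := left_good hv hW hWo hα
    refine ⟨max δu δv, lt_max_of_lt_left hδu0, max_lt hδuα hδvα, fun γ h1 h2 => ?_⟩
    exact ⟨hδu γ (lt_of_le_of_lt (le_max_left _ _) h1) h2,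
      hδv γ (lt_of_le_of_lt (le_max_right _ _) h1) h2⟩
  have pairRight : ∀ l : ℝ, 0 ≤ l → l < 1 → ∃ e, l < e ∧ e ≤ 1 ∧ Good l e ∧
      (l = 0 → fuzzyCut u 0 ⊆ ballImage W (fuzzyCut u e) ∧
        fuzzyCut v 0 ⊆ ballImage W (fuzzyCut v e)) := by
    intro l h0 h1
    obtain ⟨eu, heu1, heu2, heu3, heu4⟩ := right_good hu hW hWo hWs h0 h1
    obtain ⟨ev, hev1, hev2, hev3, hev4⟩ := right_good hv hW hWo hWs h0 h1
    have hme : 0 < min eu ev := lt_min (lt_of_le_of_lt h0 heu1) (lt_of_le_of_lt h0 hev1)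
    refine ⟨min eu ev, lt_min heu1 hev1, le_trans (min_le_left _ _) heu2, ?_, ?_⟩
    · intro γ hγ1 hγ2
      constructor
      · exact (heu3 γ hγ1 (le_trans hγ2 (min_le_left _ _))).trans
          (ballImage_mono_set (cut_mono hme (min_le_left _ _)))
      · exact (hev3 γ hγ1 (le_trans hγ2 (min_le_right _ _))).trans
          (ballImage_mono_set (cut_mono hme (min_le_right _ _)))
    · intro hl
      exact ⟨(heu4 hl).trans (ballImage_mono_set (cut_mono hme (min_le_left _ _))),
        (hev4 hl).trans (ballImage_mono_set (cut_mono hme (min_le_right _ _)))⟩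
  have hT1 : (1:ℝ) ∈ {x : ℝ | 0 ≤ x ∧ Lad x} := ⟨zero_le_one, lad1⟩
  have hTne : Set.Nonempty {x : ℝ | 0 ≤ x ∧ Lad x} := ⟨1, hT1⟩
  have hTbdd : BddBelow {x : ℝ | 0 ≤ x ∧ Lad x} := ⟨0, fun x hx => hx.1⟩
  have hl0 : 0 ≤ sInf {x : ℝ | 0 ≤ x ∧ Lad x} := le_csInf hTne (fun x hx => hx.1)
  have hl1 : sInf {x : ℝ | 0 ≤ x ∧ Lad x} < 1 := by
    obtain ⟨δ, hδ0, hδ1, hδG⟩ := pairLeft 1 one_pos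
    have : δ ∈ {x : ℝ | 0 ≤ x ∧ Lad x} := ⟨hδ0.le, prepend δ 1 hδ1 lad1 hδG⟩
    exact lt_of_le_of_lt (csInf_le hTbdd this) hδ1
  have hlT : Lad (sInf {x : ℝ | 0 ≤ x ∧ Lad x}) := by
    obtain ⟨e, he1, he2, heG, -⟩ := pairRight _ hl0 hl1
    obtain ⟨x, hxT, hxe⟩ := exists_lt_of_csInf_lt hTne he1
    rcases lt_or_ge (sInf {x : ℝ | 0 ≤ x ∧ Lad x}) x with h | h
    · refine prepend _ x h hxT.2 ?_
      intro γ hγ1 hγ2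
      have hx0 : 0 < x := lt_of_le_of_lt hl0 h
      obtain ⟨hu', hv'⟩ := heG γ hγ1 (le_trans hγ2 hxe.le)
      exact ⟨hu'.trans (ballImage_mono_set (cut_mono hx0 hxe.le)),
        hv'.trans (ballImage_mono_set (cut_mono hx0 hxe.le))⟩
    · have heq : sInf {x : ℝ | 0 ≤ x ∧ Lad x} = x :=
        le_antisymm (csInf_le hTbdd hxT) h
      rw [heq]; exact hxT.2
  have hlzero : sInf {x : ℝ | 0 ≤ x ∧ Lad x} = 0 := by
    by_contra hne
    have hpos : 0 < sInf {x : ℝ | 0 ≤ x ∧ Lad x} := lt_of_le_of_ne hl0 (Ne.symm hne)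
    obtain ⟨δ, hδ0, hδl, hδG⟩ := pairLeft _ hpos
    have : δ ∈ {x : ℝ | 0 ≤ x ∧ Lad x} := ⟨hδ0.le, prepend _ _ hδl hlT hδG⟩
    exact absurd (csInf_le hTbdd this) (not_le.2 hδl)
  rw [hlzero] at hlT
  obtain ⟨m, β, h0, h1, hinc, hgood⟩ := hlT
  have hm : 0 < m := by
    rcases Nat.eq_zero_or_pos m with rfl | h
    · rw [h0] at h1; norm_num at h1
    · exact h
  obtain ⟨e₀, he₀1, he₀2, -, he₀4⟩ := pairRight 0 le_rfl one_pos
  obtain ⟨hbu, hbv⟩ := he₀4 rfl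
  have hβ1 : 0 < β 1 := by
    have := hinc 0 hm
    rwa [h0] at this
  have hγ₀pos : 0 < min e₀ (β 1) := lt_min he₀1 hβ1
  obtain ⟨hgu, hgv⟩ := hgood 0 hm (min e₀ (β 1)) (by rw [h0]; exact hγ₀pos) (min_le_right _ _)
  refine ⟨m, β, hm, h0, h1, hinc, hgood, ?_, ?_⟩
  · exact ((hbu.trans (ballImage_mono_set (cut_mono hγ₀pos (min_le_left _ _)))).trans
      (ballImage_mono_set hgu))
  · exact ((hbv.trans (ballImage_mono_set (cut_mono hγ₀pos (min_le_left _ _)))).trans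
      (ballImage_mono_set hgv))

end Ladder

section ZadehIter

variable {f : X → X} {φ : X → ℝ}

lemma zadeh_sSup_mem (hfin : (Set.range φ).Finite) {x : X}
    (hne : (φ '' (f ⁻¹' {x})).Nonempty) : zadeh f φ x ∈ φ '' (f ⁻¹' {x}) :=
  Set.Nonempty.csSup_mem hne (hfin.subset (Set.image_subset_range _ _))

lemma le_zadeh (hfin : (Set.range φ).Finite) {x : X} {y : ℝ} (hy : y ∈ φ '' (f ⁻¹' {x})) :
    y ≤ zadeh f φ x :=
  le_csSup ((hfin.subset (Set.image_subset_range _ _)).bddAbove) hy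

lemma zadeh_step (hfin : (Set.range φ).Finite) (h0 : ∀ x, 0 ≤ φ x) :
    (∀ x, 0 ≤ zadeh f φ x) ∧ (Set.range (zadeh f φ)).Finite ∧
    (∀ α : ℝ, 0 < α → {x | α ≤ zadeh f φ x} = f '' {z | α ≤ φ z}) ∧
    ({x | 0 < zadeh f φ x} = f '' {z | 0 < φ z}) := by
  have hca : ∀ x : X, (zadeh f φ x = 0) ∨ zadeh f φ x ∈ φ '' (f ⁻¹' {x}) := by
    intro x
    rcases Set.eq_empty_or_nonempty (φ '' (f ⁻¹' {x})) with h | h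
    · left; unfold zadeh; rw [h]; exact Real.sSup_empty
    · right; exact zadeh_sSup_mem hfin h
  have hnn : ∀ x, 0 ≤ zadeh f φ x := by
    intro x
    rcases hca x with h | h
    · rw [h]
    · obtain ⟨z, -, hz⟩ := h
      rw [← hz]; exact h0 z
  refine ⟨hnn, ?_, ?_, ?_⟩
  · apply Set.Finite.subset (hfin.insert 0)
    rintro y ⟨x, rfl⟩
    rcases hca x with h | h
    · rw [h]; exact Set.mem_insert _ _
    · obtain ⟨z, -, hz⟩ := h
      rw [← hz]; exact Set.mem_insert_of_mem _ ⟨z, rfl⟩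
  · intro α hα
    apply Set.Subset.antisymm
    · intro x hx
      rcases hca x with h | h
      · exfalso; rw [Set.mem_setOf_eq, h] at hx; linarith
      · obtain ⟨z, hz1, hz2⟩ := h
        exact ⟨z, by rw [Set.mem_setOf_eq, hz2]; exact hx, Set.mem_singleton_iff.1 hz1⟩
    · rintro x ⟨z, hz1, rfl⟩
      exact le_trans hz1 (le_zadeh hfin ⟨z, Set.mem_preimage.2 rfl, rfl⟩)
  · apply Set.Subset.antisymm
    · intro x hx
      rcases hca x with h | h
      · exfalso; rw [Set.mem_setOf_eq, h] at hx; linarith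
      · obtain ⟨z, hz1, hz2⟩ := h
        exact ⟨z, by rw [Set.mem_setOf_eq, hz2]; exact hx, Set.mem_singleton_iff.1 hz1⟩
    · rintro x ⟨z, hz1, rfl⟩
      exact lt_of_lt_of_le hz1 (le_zadeh hfin ⟨z, Set.mem_preimage.2 rfl, rfl⟩)

lemma zadeh_iter (hfin : (Set.range φ).Finite) (h0 : ∀ x, 0 ≤ φ x) :
    ∀ n : ℕ, (∀ x, 0 ≤ (zadeh f)^[n] φ x) ∧ (Set.range ((zadeh f)^[n] φ)).Finite ∧
    (∀ α : ℝ, 0 < α → {x | α ≤ (zadeh f)^[n] φ x} = f^[n] '' {z | α ≤ φ z}) ∧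
    ({x | 0 < (zadeh f)^[n] φ x} = f^[n] '' {z | 0 < φ z}) := by
  intro n
  induction n with
  | zero =>
    refine ⟨h0, hfin, fun α hα => ?_, ?_⟩ <;> simp
  | succ n ih =>
    obtain ⟨ih0, ihfin, ihcut, ihpos⟩ := ih
    have hstep := zadeh_step (f := f) ihfin ih0
    have heq : (zadeh f)^[n+1] φ = zadeh f ((zadeh f)^[n] φ) :=
      Function.iterate_succ_apply' (zadeh f) n φ
    refine ⟨?_, ?_, ?_, ?_⟩
    · rw [heq]; exact hstep.1
    · rw [heq]; exact hstep.2.1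
    · intro α hα
      rw [heq, hstep.2.2.1 α hα, ihcut α hα, ← Set.image_comp, ← Function.iterate_succ']
    · rw [heq, hstep.2.2.2, ihpos, ← Set.image_comp, ← Function.iterate_succ']

end ZadehIter

section NatRung

lemma beta_mono {β : ℕ → ℝ} {m : ℕ} (hinc : ∀ i, i < m → β i < β (i+1)) :
    ∀ b, b ≤ m → ∀ a, a ≤ b → β a ≤ β b := by
  intro b
  induction b with
  | zero => intro _ a ha; rw [Nat.le_zero.1 ha]
  | succ b ihb =>
    intro hbm a ha
    rcases Nat.eq_or_lt_of_le ha with rfl | h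
    · rfl
    · exact le_trans (ihb (le_trans (Nat.le_succ b) hbm) a (Nat.lt_succ_iff.1 h))
        (le_of_lt (hinc b (Nat.lt_of_succ_le hbm)))

lemma find_rung {β : ℕ → ℝ} {m : ℕ} (hm : 0 < m) (h0 : β 0 = 0) (h1 : β m = 1)
    (hinc : ∀ i, i < m → β i < β (i+1)) {α : ℝ} (hα0 : 0 < α) (hα1 : α ≤ 1) :
    ∃ i, i < m ∧ β i < α ∧ α ≤ β (i+1) := by
  classical
  letI : DecidablePred (fun k => β k < α) := fun k => Classical.dec _
  have hP0 : β 0 < α := by rw [h0]; exact hα0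
  have hPi : β (Nat.findGreatest (fun k => β k < α) m) < α :=
    Nat.findGreatest_spec (P := fun k => β k < α) (Nat.zero_le m) hP0
  have him : Nat.findGreatest (fun k => β k < α) m ≤ m := Nat.findGreatest_le m
  have hilt : Nat.findGreatest (fun k => β k < α) m < m := by
    rcases eq_or_lt_of_le him with h | h
    · exfalso; rw [h, h1] at hPi; linarith
    · exact h
  have hnot : ¬ (β (Nat.findGreatest (fun k => β k < α) m + 1) < α) :=
    Nat.findGreatest_is_greatest (P := fun k => β k < α) (Nat.lt_succ_self _)
      (Nat.succ_le_of_lt hilt)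
  exact ⟨_, hilt, hPi, not_lt.1 hnot⟩

end NatRung

end ZTrans
end Aux

/-- If the induced map `K ↦ f(K)` is topologically transitive on the hyperspace
`(𝒦(X), 𝒦(𝒰))` (stated via basic Hausdorff-uniformity balls), then the Zadeh extension is
topologically transitive on `(ℱ(X), 𝒰_∞)` (stated via basic level-wise balls). -/
theorem stmt16 {X : Type*} [UniformSpace X] {f : X → X} (hf : Continuous f)
    (htrans : ∀ K L : Set X, IsCompact K → K.Nonempty → IsCompact L → L.Nonempty →
      ∀ U ∈ 𝓤 X, ∀ V ∈ 𝓤 X, ∃ n : ℕ, 0 < n ∧ ∃ A : Set X, IsCompact A ∧ A.Nonempty ∧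
        KRel U K A ∧ KRel V L (f^[n] '' A)) :
    ∀ u v : X → ℝ, IsFuzzySet u → IsFuzzySet v → ∀ U ∈ 𝓤 X, ∀ V ∈ 𝓤 X,
      ∃ n : ℕ, 0 < n ∧ ∃ w : X → ℝ, IsFuzzySet w ∧ FRel U u w ∧
        FRel V v ((zadeh f)^[n] w) := by
  intro u v hu hv U hU V hV
  classical
  obtain ⟨x₁, hx₁⟩ := hu.normal
  -- the entourage tower
  obtain ⟨Ω₁, hΩ₁u, hΩ₁o, hΩ₁s, hΩ₁c⟩ :=
    comp_open_symm_mem_uniformity_sets (Filter.inter_mem hU hV)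
  obtain ⟨Ω, hΩu, hΩo, hΩs, hΩc⟩ := comp_open_symm_mem_uniformity_sets hΩ₁u
  have hΩsub : Ω ⊆ Ω₁ := by
    rintro ⟨a, b⟩ hp
    exact hΩc ⟨a, refl_mem_uniformity hΩu, hp⟩
  have hΩ₁sub : Ω₁ ⊆ U ∩ V := by
    rintro ⟨a, b⟩ hp
    exact hΩ₁c ⟨a, refl_mem_uniformity hΩ₁u, hp⟩
  have c2 : ∀ S : Set X, ballImage Ω (ballImage Ω S) ⊆ ballImage Ω₁ S := by
    rintro S y ⟨b, ⟨a, haS, hab⟩, hby⟩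
    exact ⟨a, haS, hΩc ⟨b, hab, hby⟩⟩
  have c2' : ∀ S : Set X, ballImage Ω₁ (ballImage Ω₁ S) ⊆ ballImage (U ∩ V) S := by
    rintro S y ⟨b, ⟨a, haS, hab⟩, hby⟩
    exact ⟨a, haS, hΩ₁c ⟨b, hab, hby⟩⟩
  have cD : ∀ S : Set X, ballImage Ω (ballImage Ω S) ⊆ ballImage (U ∩ V) S := fun S =>
    (c2 S).trans (ZTrans.ballImage_mono_ent hΩ₁sub)
  have cT : ∀ S : Set X,
      ballImage Ω (ballImage Ω (ballImage Ω S)) ⊆ ballImage (U ∩ V) S := fun S =>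
    (ZTrans.ballImage_mono_ent hΩsub).trans
      ((ZTrans.ballImage_mono_set (c2 S)).trans (c2' S))
  have cQ : ∀ S : Set X,
      ballImage Ω (ballImage Ω (ballImage Ω (ballImage Ω S))) ⊆ ballImage (U ∩ V) S :=
    fun S => (c2 _).trans ((ZTrans.ballImage_mono_set (c2 S)).trans (c2' S))
  -- the ladder of levels
  obtain ⟨m, β, hm, hβ0, hβm, hβinc, hgood, hgu0, hgv0⟩ := ZTrans.ladder hu hv hΩu hΩo hΩs
  have hβle : ∀ b, b ≤ m → ∀ a, a ≤ b → β a ≤ β b := ZTrans.beta_mono hβinc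
  have hβnn : ∀ a, a ≤ m → 0 ≤ β a := by
    intro a ha
    have := hβle a ha 0 (Nat.zero_le a)
    rwa [hβ0] at this
  have hr_pos : ∀ i : Fin m, 0 < β (i.1 + 1) := by
    intro i
    have h1 : 0 ≤ β i.1 := hβnn i.1 i.2.le
    have h2 := hβinc i.1 i.2
    linarith
  have hr_le1 : ∀ i : Fin m, β (i.1 + 1) ≤ 1 := by
    intro i
    have := hβle m le_rfl (i.1 + 1) (Nat.succ_le_of_lt i.2)
    rwa [hβm] at this
  have hr_anti : ∀ i i' : Fin m, i ≤ i' → β (i.1 + 1) ≤ β (i'.1 + 1) := by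
    intro i i' h
    exact hβle (i'.1 + 1) (Nat.succ_le_of_lt i'.2) (i.1 + 1) (Nat.succ_le_succ h)
  -- finite nets of the representative cuts
  choose tu htu_sub htu_cov using fun i : Fin m =>
    ZTrans.exists_net (ZTrans.cut_compact hu _ (hr_pos i).le) hΩu
  choose tv htv_sub htv_cov using fun i : Fin m =>
    ZTrans.exists_net (ZTrans.cut_compact hv _ (hr_pos i).le) hΩu
  have htu_ne : ∀ i, (tu i).Nonempty := by
    intro i
    obtain ⟨z, hz⟩ := ZTrans.cut_nonempty hu (hr_le1 i)
    obtain ⟨p, hp, -⟩ := htu_cov i hz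
    exact ⟨p, hp⟩
  have htv_ne : ∀ i, (tv i).Nonempty := by
    intro i
    obtain ⟨z, hz⟩ := ZTrans.cut_nonempty hv (hr_le1 i)
    obtain ⟨p, hp, -⟩ := htv_cov i hz
    exact ⟨p, hp⟩
  -- weak mixing of all orders applied to all pairs of net points
  have htr : ZTrans.HTrans f := htrans
  obtain ⟨n, hn, hwit⟩ := ZTrans.wm_finite htr hf x₁
    (ι := (i : Fin m) × (↥(tu i) × ↥(tv i)))
    (fun j => UniformSpace.ball (j.2.1 : X) Ω)
    (fun j => UniformSpace.ball (j.2.2 : X) Ω)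
    (fun j => UniformSpace.isOpen_ball _ hΩo)
    (fun j => ⟨_, UniformSpace.mem_ball_self _ hΩu⟩)
    (fun j => UniformSpace.isOpen_ball _ hΩo)
    (fun j => ⟨_, UniformSpace.mem_ball_self _ hΩu⟩)
  choose xw hxw1 hxw2 using hwit
  -- the nested compact sets
  set F : Fin m → Set X :=
    (fun i => xw '' {j : (i : Fin m) × (↥(tu i) × ↥(tv i)) | i ≤ j.1}) with hFdef
  set A : Fin m → Set X := (fun i => closure (F i)) with hAdef
  have hFfin : ∀ i, (F i).Finite := fun i => Set.Finite.image _ (Set.toFinite _)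
  have hFA : ∀ i, F i ⊆ A i := fun i => subset_closure
  have hFne : ∀ i, (F i).Nonempty := by
    intro i
    obtain ⟨p, hp⟩ := htu_ne i
    obtain ⟨q, hq⟩ := htv_ne i
    exact ⟨xw ⟨i, ⟨⟨p, hp⟩, ⟨q, hq⟩⟩⟩, ⟨⟨i, ⟨⟨p, hp⟩, ⟨q, hq⟩⟩⟩, le_refl i, rfl⟩⟩
  have hAcomp : ∀ i, IsCompact (A i) := fun i => ((hFfin i).isCompact).closure
  have hAclosed : ∀ i, IsClosed (A i) := fun i => isClosed_closure
  have hAne : ∀ i, (A i).Nonempty := fun i => ((hFne i).mono (hFA i))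
  have hAanti : ∀ i i' : Fin m, i ≤ i' → A i' ⊆ A i := by
    intro i i' h
    apply closure_mono
    apply Set.image_mono
    exact fun j hj => le_trans h hj
  -- net approximation facts
  have hFu : ∀ i : Fin m, F i ⊆ ballImage Ω (fuzzyCut u (β (i.1 + 1))) := by
    rintro i y ⟨j, hj, rfl⟩
    refine ⟨(j.2.1 : X), ?_, hxw1 j⟩
    have h1 : (j.2.1 : X) ∈ fuzzyCut u (β (j.1.1 + 1)) := htu_sub j.1 j.2.1.2
    exact ZTrans.cut_mono (hr_pos i) (hr_anti i j.1 hj) h1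
  have hFv : ∀ i : Fin m, f^[n] '' (F i) ⊆ ballImage Ω (fuzzyCut v (β (i.1 + 1))) := by
    rintro i y ⟨z, ⟨j, hj, rfl⟩, rfl⟩
    refine ⟨(j.2.2 : X), ?_, hxw2 j⟩
    have h1 : (j.2.2 : X) ∈ fuzzyCut v (β (j.1.1 + 1)) := htv_sub j.1 j.2.2.2
    exact ZTrans.cut_mono (hr_pos i) (hr_anti i j.1 hj) h1
  have hFu' : ∀ i : Fin m, fuzzyCut u (β (i.1 + 1)) ⊆ ballImage Ω (ballImage Ω (F i)) := by
    intro i z hz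
    obtain ⟨p, hp, hpz⟩ := htu_cov i hz
    obtain ⟨q, hq⟩ := htv_ne i
    refine ⟨p, ⟨xw ⟨i, ⟨⟨p, hp⟩, ⟨q, hq⟩⟩⟩, ⟨⟨i, ⟨⟨p, hp⟩, ⟨q, hq⟩⟩⟩, le_refl i, rfl⟩, ?_⟩, hpz⟩
    exact hΩs.symm _ _ (hxw1 ⟨i, ⟨⟨p, hp⟩, ⟨q, hq⟩⟩⟩)
  have hFv' : ∀ i : Fin m,
      fuzzyCut v (β (i.1 + 1)) ⊆ ballImage Ω (ballImage Ω (f^[n] '' (F i))) := by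
    intro i z hz
    obtain ⟨q, hq, hqz⟩ := htv_cov i hz
    obtain ⟨p, hp⟩ := htu_ne i
    refine ⟨q, ⟨f^[n] (xw ⟨i, ⟨⟨p, hp⟩, ⟨q, hq⟩⟩⟩),
      ⟨xw ⟨i, ⟨⟨p, hp⟩, ⟨q, hq⟩⟩⟩, ⟨⟨i, ⟨⟨p, hp⟩, ⟨q, hq⟩⟩⟩, le_refl i, rfl⟩, rfl⟩, ?_⟩, hqz⟩
    exact hΩs.symm _ _ (hxw2 ⟨i, ⟨⟨p, hp⟩, ⟨q, hq⟩⟩⟩)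
  -- the step fuzzy set w
  set w : X → ℝ :=
    (fun pt => sSup (insert (0:ℝ) ((fun i : Fin m => β (i.1 + 1)) '' {i : Fin m | pt ∈ A i})))
    with hwdef
  have hlfin : ∀ pt : X,
      (insert (0:ℝ) ((fun i : Fin m => β (i.1 + 1)) '' {i : Fin m | pt ∈ A i})).Finite :=
    fun pt => Set.Finite.insert _ (Set.Finite.image _ (Set.toFinite _))
  have hlne : ∀ pt : X,
      (insert (0:ℝ) ((fun i : Fin m => β (i.1 + 1)) '' {i : Fin m | pt ∈ A i})).Nonempty :=
    fun pt => ⟨0, Set.mem_insert _ _⟩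
  have hwmem : ∀ pt : X,
      w pt ∈ insert (0:ℝ) ((fun i : Fin m => β (i.1 + 1)) '' {i : Fin m | pt ∈ A i}) :=
    fun pt => Set.Nonempty.csSup_mem (hlne pt) (hlfin pt)
  have hw0 : ∀ pt, 0 ≤ w pt := fun pt =>
    le_csSup (hlfin pt).bddAbove (Set.mem_insert _ _)
  have hw1 : ∀ pt, w pt ≤ 1 := by
    intro pt
    apply csSup_le (hlne pt)
    rintro y (rfl | ⟨i, hi, rfl⟩)
    · exact zero_le_one
    · exact hr_le1 i
  have hwge : ∀ (i : Fin m) (pt : X), pt ∈ A i → β (i.1 + 1) ≤ w pt := by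
    intro i pt hpt
    exact le_csSup (hlfin pt).bddAbove (Set.mem_insert_of_mem _ ⟨i, hpt, rfl⟩)
  have hwcut : ∀ i : Fin m, ∀ α : ℝ, β i.1 < α → α ≤ β (i.1 + 1) →
      {pt | α ≤ w pt} = A i := by
    intro i α hα1 hα2
    apply Set.Subset.antisymm
    · intro pt hpt
      have hmem := hwmem pt
      rcases hmem with h | ⟨i', hi', hival⟩
      · exfalso
        rw [Set.mem_setOf_eq] at hpt
        rw [h] at hpt
        have : 0 ≤ β i.1 := hβnn i.1 i.2.le
        linarith
      · have hival' : β (i'.1 + 1) = w pt := hival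
        have hle : α ≤ β (i'.1 + 1) := by
          rw [Set.mem_setOf_eq] at hpt
          rw [hival']; exact hpt
        have hii' : i ≤ i' := by
          by_contra hcon
          push_neg at hcon
          have : i'.1 + 1 ≤ i.1 := hcon
          have := hβle i.1 i.2.le (i'.1 + 1) this
          linarith
        exact hAanti i i' hii' hi'
    · intro pt hpt
      exact le_trans hα2 (hwge i pt hpt)
  have hwpos : {pt | 0 < w pt} = A ⟨0, hm⟩ := by
    apply Set.Subset.antisymm
    · intro pt hpt
      rcases hwmem pt with h | ⟨i', hi', hival⟩
      · exfalso
        rw [Set.mem_setOf_eq, h] at hpt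
        exact lt_irrefl _ hpt
      · exact hAanti ⟨0, hm⟩ i' (by exact Nat.zero_le _) hi'
    · intro pt hpt
      exact lt_of_lt_of_le (hr_pos ⟨0, hm⟩) (hwge ⟨0, hm⟩ pt hpt)
  -- w is a fuzzy set
  have hwfuzzy : IsFuzzySet w := by
    refine ⟨fun pt => ⟨hw0 pt, hw1 pt⟩, ?_, ?_, ?_⟩
    · rw [upperSemicontinuous_iff_isOpen_preimage]
      intro y
      rcases le_or_gt y 0 with hy | hy
      · have : w ⁻¹' Set.Iio y = ∅ := by
          apply Set.eq_empty_iff_forall_notMem.2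
          intro pt hpt
          rw [Set.mem_preimage, Set.mem_Iio] at hpt
          linarith [hw0 pt]
        rw [this]; exact isOpen_empty
      · have : w ⁻¹' Set.Iio y =
            ⋂ i : Fin m, (if y ≤ β (i.1 + 1) then (A i)ᶜ else Set.univ) := by
          apply Set.Subset.antisymm
          · intro pt hpt
            rw [Set.mem_preimage, Set.mem_Iio] at hpt
            apply Set.mem_iInter.2
            intro i
            split_ifs with hyi
            · intro hcon
              have := hwge i pt hcon
              linarith
            · trivial
          · intro pt hpt
            rw [Set.mem_preimage, Set.mem_Iio]
            rcases hwmem pt with h | ⟨i', hi', hival⟩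
            · rw [h]; exact hy
            · rw [← hival]
              by_contra hcon
              push_neg at hcon
              have hmem := Set.mem_iInter.1 hpt i'
              rw [if_pos hcon] at hmem
              exact hmem hi'
        rw [this]
        apply isOpen_iInter_of_finite
        intro i
        split_ifs with hyi
        · exact (hAclosed i).isOpen_compl
        · exact isOpen_univ
    · refine ⟨(hAne ⟨m - 1, Nat.sub_lt hm one_pos⟩).choose, le_antisymm (hw1 _) ?_⟩
      have hpt := (hAne ⟨m - 1, Nat.sub_lt hm one_pos⟩).choose_spec
      have := hwge ⟨m - 1, Nat.sub_lt hm one_pos⟩ _ hpt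
      have hval : ((⟨m - 1, Nat.sub_lt hm one_pos⟩ : Fin m) : ℕ) + 1 = m :=
        Nat.sub_add_cancel hm
      rwa [hval, hβm] at this
    · have : closure {x | 0 < w x} = A ⟨0, hm⟩ := by
        rw [hwpos]
        exact (hAclosed _).closure_eq
      rw [this]
      exact hAcomp _
  -- cut computations for w
  have hcutw : ∀ i : Fin m, ∀ α : ℝ, β i.1 < α → α ≤ β (i.1 + 1) → fuzzyCut w α = A i := by
    intro i α hα1 hα2
    have hα0 : 0 < α := lt_of_le_of_lt (hβnn i.1 i.2.le) hα1
    rw [ZTrans.cut_of_ne hα0.ne']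
    exact hwcut i α hα1 hα2
  have hcutw0 : fuzzyCut w 0 = A ⟨0, hm⟩ := by
    rw [ZTrans.cut_zero, hwpos]
    exact (hAclosed _).closure_eq
  -- cut computations for the zadeh iterate
  have hwrange : (Set.range w).Finite := by
    apply Set.Finite.subset ((Set.finite_range (fun i : Fin m => β (i.1 + 1))).insert 0)
    rintro y ⟨pt, rfl⟩
    rcases hwmem pt with h | ⟨i', hi', hival⟩
    · rw [h]; exact Set.mem_insert _ _
    · rw [← hival]; exact Set.mem_insert_of_mem _ ⟨i', rfl⟩
  obtain ⟨hz0, hzfin, hzcut, hzpos⟩ := ZTrans.zadeh_iter hwrange hw0 n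
  have hcutz : ∀ i : Fin m, ∀ α : ℝ, β i.1 < α → α ≤ β (i.1 + 1) →
      fuzzyCut ((zadeh f)^[n] w) α = f^[n] '' (A i) := by
    intro i α hα1 hα2
    have hα0 : 0 < α := lt_of_le_of_lt (hβnn i.1 i.2.le) hα1
    rw [ZTrans.cut_of_ne hα0.ne', hzcut α hα0, hwcut i α hα1 hα2]
  have hcutz0 : fuzzyCut ((zadeh f)^[n] w) 0 = closure (f^[n] '' (A ⟨0, hm⟩)) := by
    rw [ZTrans.cut_zero, hzpos, hwpos]
  -- approximation chains
  have hAu1 : ∀ i : Fin m, A i ⊆ ballImage (U ∩ V) (fuzzyCut u (β (i.1 + 1))) := by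
    intro i
    exact ((ZTrans.closure_subset_ballImage hΩu hΩs (F i)).trans
      (ZTrans.ballImage_mono_set (hFu i))).trans (cD _)
  have hAv1 : ∀ i : Fin m, f^[n] '' (A i) ⊆ ballImage (U ∩ V) (fuzzyCut v (β (i.1 + 1))) := by
    intro i
    have h1 : f^[n] '' (A i) ⊆ closure (f^[n] '' (F i)) :=
      image_closure_subset_closure_image (hf.iterate n)
    exact ((h1.trans (ZTrans.closure_subset_ballImage hΩu hΩs _)).trans
      (ZTrans.ballImage_mono_set (hFv i))).trans (cD _)
  have hAv1c : ∀ i : Fin m,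
      closure (f^[n] '' (A i)) ⊆ ballImage (U ∩ V) (fuzzyCut v (β (i.1 + 1))) := by
    intro i
    have h1 : closure (f^[n] '' (A i)) ⊆ closure (f^[n] '' (F i)) :=
      closure_minimal (image_closure_subset_closure_image (hf.iterate n)) isClosed_closure
    exact ((h1.trans (ZTrans.closure_subset_ballImage hΩu hΩs _)).trans
      (ZTrans.ballImage_mono_set (hFv i))).trans (cD _)
  have hcutu_chain : ∀ i : Fin m, ∀ α : ℝ, β i.1 < α → α ≤ β (i.1 + 1) →
      fuzzyCut u α ⊆ ballImage (U ∩ V) (A i) := by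
    intro i α h1 h2
    have hg := (hgood i.1 i.2 α h1 h2).1
    exact (((hg.trans (ZTrans.ballImage_mono_set (hFu' i))).trans (cT _))).trans
      (ZTrans.ballImage_mono_set (hFA i))
  have hcutv_chain : ∀ i : Fin m, ∀ α : ℝ, β i.1 < α → α ≤ β (i.1 + 1) →
      fuzzyCut v α ⊆ ballImage (U ∩ V) (f^[n] '' (A i)) := by
    intro i α h1 h2
    have hg := (hgood i.1 i.2 α h1 h2).2
    exact (((hg.trans (ZTrans.ballImage_mono_set (hFv' i))).trans (cT _))).trans
      (ZTrans.ballImage_mono_set (Set.image_mono (hFA i)))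
  have hcutu0 : fuzzyCut u 0 ⊆ ballImage (U ∩ V) (A ⟨0, hm⟩) := by
    have hb : fuzzyCut u (β 1) ⊆ ballImage Ω (ballImage Ω (F ⟨0, hm⟩)) := hFu' ⟨0, hm⟩
    exact ((hgu0.trans (ZTrans.ballImage_mono_set
      (ZTrans.ballImage_mono_set hb))).trans (cQ _)).trans
      (ZTrans.ballImage_mono_set (hFA _))
  have hcutv0 : fuzzyCut v 0 ⊆ ballImage (U ∩ V) (closure (f^[n] '' (A ⟨0, hm⟩))) := by
    have hb : fuzzyCut v (β 1) ⊆ ballImage Ω (ballImage Ω (f^[n] '' (F ⟨0, hm⟩))) :=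
      hFv' ⟨0, hm⟩
    refine ((hgv0.trans (ZTrans.ballImage_mono_set
      (ZTrans.ballImage_mono_set hb))).trans (cQ _)).trans (ZTrans.ballImage_mono_set ?_)
    exact (Set.image_mono (hFA _)).trans subset_closure
  have htoU : ∀ S : Set X, ballImage (U ∩ V) S ⊆ ballImage U S := fun S =>
    ZTrans.ballImage_mono_ent Set.inter_subset_left
  have htoV : ∀ S : Set X, ballImage (U ∩ V) S ⊆ ballImage V S := fun S =>
    ZTrans.ballImage_mono_ent Set.inter_subset_right
  refine ⟨n, hn, w, hwfuzzy, ?_, ?_⟩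
  · intro α hα
    rcases eq_or_lt_of_le hα.1 with h0 | h0
    · rw [← h0, hcutw0]
      constructor
      · exact hcutu0.trans (htoU _)
      · exact ((hAu1 ⟨0, hm⟩).trans (ZTrans.ballImage_mono_set
          (ZTrans.cut_subset_supp (hr_pos ⟨0, hm⟩)))).trans (htoU _)
    · obtain ⟨i0, hi0m, hrg1, hrg2⟩ := ZTrans.find_rung hm hβ0 hβm hβinc h0 hα.2
      rw [hcutw ⟨i0, hi0m⟩ α hrg1 hrg2]
      constructor
      · exact (hcutu_chain ⟨i0, hi0m⟩ α hrg1 hrg2).trans (htoU _)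
      · exact ((hAu1 ⟨i0, hi0m⟩).trans (ZTrans.ballImage_mono_set
          (ZTrans.cut_mono h0 hrg2))).trans (htoU _)
  · intro α hα
    rcases eq_or_lt_of_le hα.1 with h0 | h0
    · rw [← h0, hcutz0]
      constructor
      · exact hcutv0.trans (htoV _)
      · exact ((hAv1c ⟨0, hm⟩).trans (ZTrans.ballImage_mono_set
          (ZTrans.cut_subset_supp (hr_pos ⟨0, hm⟩)))).trans (htoV _)
    · obtain ⟨i0, hi0m, hrg1, hrg2⟩ := ZTrans.find_rung hm hβ0 hβm hβinc h0 hα.2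
      rw [hcutz ⟨i0, hi0m⟩ α hrg1 hrg2]
      constructor
      · exact (hcutv_chain ⟨i0, hi0m⟩ α hrg1 hrg2).trans (htoV _)
      · exact ((hAv1 ⟨i0, hi0m⟩).trans (ZTrans.ballImage_mono_set
          (ZTrans.cut_mono h0 hrg2))).trans (htoV _)
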